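/- Let q be an odd prime power and for j ∈ F_q let S_j = {x ∈ F_q^d : ‖x‖ = j}. For any m, m' ∈ F_q^d: Σ_{j∈F_q} Ŝ_j(m) · conj(Ŝ_j(m')) = δ₀(m)δ₀(m')/q + q^{−d−1} Σ_{s∈F_q*} χ(s(‖m‖−‖m'‖)), where Ŝ_j(m) = q^{−d} Σ_{x∈S_j} χ(−m·x) and δ₀ is the indicator of the zero vector. -/

import Mathlib

open Finset Matrix

lemma chimapsum {F : Type} [Field F] (χ : AddChar F ℂ) {ι : Type*} (s : Finset ι) (f : ι → F) :
    χ (∑ i ∈ s, f i) = ∏ i ∈ s, χ (f i) := by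
  classical
  induction s using Finset.induction with
  | empty => simp
  | insert _ _ h ih => rw [Finset.sum_insert h, Finset.prod_insert h, AddChar.map_add_eq_mul, ih]

lemma orth1 {F : Type} [Field F] [Fintype F] [DecidableEq F]
    (χ : AddChar F ℂ) (hχ : χ ≠ 1) (c : F) :
    ∑ s : F, χ (s * c) = if c = 0 then (Fintype.card F : ℂ) else 0 := by
  simpa using AddChar.sum_mulShift c (AddChar.IsPrimitive.of_ne_one hχ)

lemma orthd {F : Type} [Field F] [Fintype F] [DecidableEq F]
    (χ : AddChar F ℂ) (hχ : χ ≠ 1) {d : ℕ} (c : Fin d → F) :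
    ∑ x : Fin d → F, χ (x ⬝ᵥ c) = if c = 0 then ((Fintype.card F : ℂ)) ^ d else 0 := by
  have h1 : ∀ x : Fin d → F, χ (x ⬝ᵥ c) = ∏ i, χ (x i * c i) := fun x =>
    chimapsum χ univ (fun i => x i * c i)
  simp_rw [h1]
  rw [← Fintype.prod_sum (fun i t => χ (t * c i))]
  by_cases hc : c = 0
  · simp [hc, orth1 χ hχ]
  · obtain ⟨i, hi⟩ : ∃ i, c i ≠ 0 := by
      by_contra h
      push_neg at h
      exact hc (funext h)
    rw [if_neg hc]
    apply Finset.prod_eq_zero (Finset.mem_univ i)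
    rw [orth1 χ hχ, if_neg hi]

theorem stmt_8 (F : Type) [Field F] [Fintype F] [DecidableEq F]
    (hq : ringChar F ≠ 2)
    (χ : AddChar F ℂ) (hχ : χ ≠ 1)
    (d : ℕ)
    (Shat : F → (Fin d → F) → ℂ)
    (hS : ∀ j m, Shat j m
      = ((Fintype.card F : ℂ) ^ d)⁻¹ *
          ∑ x ∈ Finset.univ.filter (fun x : Fin d → F => x ⬝ᵥ x = j),
            χ (-(m ⬝ᵥ x)))
    (m m' : Fin d → F) :
    ∑ j : F, Shat j m * (starRingEnd ℂ) (Shat j m')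
      = (if m = 0 then 1 else 0) * (if m' = 0 then 1 else 0) / (Fintype.card F : ℂ)
        + ((Fintype.card F : ℂ) ^ (d + 1))⁻¹ *
            ∑ s ∈ Finset.univ.filter (fun s : F => s ≠ 0),
              χ (s * (m ⬝ᵥ m - m' ⬝ᵥ m')) := by
  classical
  set q : ℂ := (Fintype.card F : ℂ) with hqdef
  have hq0 : q ≠ 0 := Nat.cast_ne_zero.mpr Fintype.card_ne_zero
  have hcharpos : 0 < ringChar F := Nat.pos_of_ne_zero (CharP.ringChar_ne_zero_of_finite F)
  have hconj : ∀ a : F, (starRingEnd ℂ) (χ a) = χ (-a) := fun a => by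
    rw [AddChar.starComp_apply hcharpos, AddChar.inv_apply]
  have h2 : (2 : F) ≠ 0 := by
    intro h
    have hd : ringChar F ∣ 2 := (CharP.cast_eq_zero_iff F (ringChar F) 2).mp (by exact_mod_cast h)
    haveI := ringChar.charP F
    have hp : (ringChar F).Prime := CharP.char_is_prime F (ringChar F)
    exact hq ((Nat.prime_dvd_prime_iff_eq hp Nat.prime_two).mp hd)
  have h4 : (4 : F) ≠ 0 := by
    have : (4 : F) = 2 * 2 := by norm_num
    rw [this]; exact mul_ne_zero h2 h2
  set A : F := m ⬝ᵥ m with hA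
  set A' : F := m' ⬝ᵥ m' with hA'
  set Fn : (Fin d → F) → ℂ := fun x =>
    ∑ y ∈ univ.filter (fun y : Fin d → F => y ⬝ᵥ y = x ⬝ᵥ x), χ (m' ⬝ᵥ y - m ⬝ᵥ x) with hFn
  set G : F → ℂ := fun s =>
    ∑ x : Fin d → F, ∑ y : Fin d → F,
      χ (s * (x ⬝ᵥ x) - s * (y ⬝ᵥ y) + (m' ⬝ᵥ y - m ⬝ᵥ x)) with hG
  -- C1
  have C1 : ∑ j : F, Shat j m * (starRingEnd ℂ) (Shat j m')
      = (q ^ d)⁻¹ * (q ^ d)⁻¹ * ∑ x : Fin d → F, Fn x := by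
    have e1 : ∀ j : F, Shat j m * (starRingEnd ℂ) (Shat j m')
        = (q ^ d)⁻¹ * (q ^ d)⁻¹ *
          ∑ x ∈ univ.filter (fun x : Fin d → F => x ⬝ᵥ x = j), Fn x := by
      intro j
      rw [hS j m, hS j m', _root_.map_mul, map_inv₀, map_pow, map_natCast, map_sum]
      simp_rw [hconj, neg_neg]
      rw [show ∀ a b c e : ℂ, (a * b) * (c * e) = a * c * (b * e) from
        fun _ _ _ _ => by ring]
      congr 1
      rw [Finset.sum_mul]
      apply Finset.sum_congr rfl
      intro x hx
      rw [Finset.mem_filter] at hx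
      simp only [hFn]
      rw [← hx.2, Finset.mul_sum]
      apply Finset.sum_congr rfl
      intro y _
      rw [← AddChar.map_add_eq_mul]
      congr 1
      ring
    simp_rw [e1]
    rw [← Finset.mul_sum, Finset.sum_fiberwise univ (fun x : Fin d → F => x ⬝ᵥ x) Fn]
  -- C2
  have C2 : ∑ s : F, G s = q * ∑ x : Fin d → F, Fn x := by
    simp only [hG]
    rw [Finset.sum_comm, Finset.mul_sum]
    apply Finset.sum_congr rfl
    intro x _
    rw [Finset.sum_comm]
    have e2 : ∀ y : Fin d → F,
        ∑ s : F, χ (s * (x ⬝ᵥ x) - s * (y ⬝ᵥ y) + (m' ⬝ᵥ y - m ⬝ᵥ x))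
        = (if y ⬝ᵥ y = x ⬝ᵥ x then q else 0) * χ (m' ⬝ᵥ y - m ⬝ᵥ x) := by
      intro y
      have : ∀ s : F, s * (x ⬝ᵥ x) - s * (y ⬝ᵥ y) + (m' ⬝ᵥ y - m ⬝ᵥ x)
          = s * (x ⬝ᵥ x - y ⬝ᵥ y) + (m' ⬝ᵥ y - m ⬝ᵥ x) := fun s => by ring
      simp_rw [this, AddChar.map_add_eq_mul]
      rw [← Finset.sum_mul, orth1 χ hχ]
      congr 1
      simp [sub_eq_zero, eq_comm, hqdef]
    simp_rw [e2]
    have e3 : ∀ y : Fin d → F,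
        (if y ⬝ᵥ y = x ⬝ᵥ x then q else 0) * χ (m' ⬝ᵥ y - m ⬝ᵥ x)
        = if y ⬝ᵥ y = x ⬝ᵥ x then q * χ (m' ⬝ᵥ y - m ⬝ᵥ x) else 0 := fun y => by
      split <;> simp
    simp_rw [e3]
    rw [← Finset.sum_filter]
    simp only [hFn]
    rw [Finset.mul_sum]
  -- C3
  have C3 : G 0 = (if m = 0 then (1:ℂ) else 0) * (if m' = 0 then (1:ℂ) else 0)
      * (q ^ d * q ^ d) := by
    simp only [hG]
    have e0 : ∀ x y : Fin d → F,
        (0:F) * (x ⬝ᵥ x) - 0 * (y ⬝ᵥ y) + (m' ⬝ᵥ y - m ⬝ᵥ x)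
        = x ⬝ᵥ (-m) + y ⬝ᵥ m' := by
      intro x y
      rw [dotProduct_neg, dotProduct_comm y m', dotProduct_comm m x]
      ring
    simp_rw [e0, AddChar.map_add_eq_mul, ← Finset.sum_mul_sum]
    rw [orthd χ hχ, orthd χ hχ]
    simp only [neg_eq_zero]
    split <;> split <;> ring
  -- C4
  have C4 : ∀ s : F, s ≠ 0 → G s = q ^ d * χ ((A' - A) * (4 * s)⁻¹) := by
    intro s hs
    have h2s : (2:F) * s ≠ 0 := mul_ne_zero h2 hs
    have h4s : (4:F) * s ≠ 0 := mul_ne_zero h4 hs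
    set z : Fin d → F := ((2*s)⁻¹) • (m' - m) with hz
    simp only [hG]
    have e1 : ∀ x : Fin d → F,
        ∑ y : Fin d → F, χ (s * (x ⬝ᵥ x) - s * (y ⬝ᵥ y) + (m' ⬝ᵥ y - m ⬝ᵥ x))
        = ∑ w : Fin d → F, χ (x ⬝ᵥ (m' - m - (2*s) • w) + (m' ⬝ᵥ w - s * (w ⬝ᵥ w))) := by
      intro x
      rw [← Equiv.sum_comp (Equiv.addLeft x)
        (fun y => χ (s * (x ⬝ᵥ x) - s * (y ⬝ᵥ y) + (m' ⬝ᵥ y - m ⬝ᵥ x)))]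
      apply Finset.sum_congr rfl
      intro w _
      congr 1
      have hy : (Equiv.addLeft x) w = x + w := rfl
      rw [hy]
      have hxw : (x + w) ⬝ᵥ (x + w) = x ⬝ᵥ x + 2 * (x ⬝ᵥ w) + w ⬝ᵥ w := by
        rw [dotProduct_add, add_dotProduct, add_dotProduct, dotProduct_comm w x]
        ring
      have hmx : m' ⬝ᵥ (x + w) = x ⬝ᵥ m' + m' ⬝ᵥ w := by
        rw [dotProduct_add, dotProduct_comm m' x]
      have hc : x ⬝ᵥ (m' - m - (2*s) • w) = x ⬝ᵥ m' - x ⬝ᵥ m - 2 * s * (x ⬝ᵥ w) := by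
        rw [dotProduct_sub, dotProduct_sub, dotProduct_smul, smul_eq_mul]
      have hmm : m ⬝ᵥ x = x ⬝ᵥ m := dotProduct_comm _ _
      rw [hxw, hmx, hc, hmm]
      ring
    simp_rw [e1]
    rw [Finset.sum_comm]
    have e2 : ∀ w : Fin d → F,
        ∑ x : Fin d → F, χ (x ⬝ᵥ (m' - m - (2*s) • w) + (m' ⬝ᵥ w - s * (w ⬝ᵥ w)))
        = if w = z then q ^ d * χ (m' ⬝ᵥ w - s * (w ⬝ᵥ w)) else 0 := by
      intro w
      simp_rw [AddChar.map_add_eq_mul, ← Finset.sum_mul, orthd χ hχ]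
      have hiff : (m' - m - (2*s) • w = 0) ↔ w = z := by
        rw [sub_eq_zero, hz, eq_inv_smul_iff₀ h2s, eq_comm]
      simp only [hiff]
      split <;> simp [hqdef]
    simp_rw [e2]
    rw [Finset.sum_ite_eq' univ z, if_pos (Finset.mem_univ z)]
    have harg : m' ⬝ᵥ z - s * (z ⬝ᵥ z) = (A' - A) * (4 * s)⁻¹ := by
      have hz1 : m' ⬝ᵥ z = (2*s)⁻¹ * (A' - m' ⬝ᵥ m) := by
        rw [hz, dotProduct_smul, smul_eq_mul, dotProduct_sub, hA']
      have hz2 : z ⬝ᵥ z = (2*s)⁻¹ * ((2*s)⁻¹ * (A' - m' ⬝ᵥ m - (m' ⬝ᵥ m - A))) := by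
        rw [hz, smul_dotProduct, dotProduct_smul, smul_eq_mul, smul_eq_mul,
          dotProduct_sub, sub_dotProduct, sub_dotProduct, dotProduct_comm m m', hA, hA']
      rw [hz1, hz2]
      field_simp
      ring
    rw [harg]
  -- C5
  have C5 : ∑ s ∈ univ.filter (fun s : F => s ≠ 0), χ ((A' - A) * (4 * s)⁻¹)
      = ∑ s ∈ univ.filter (fun s : F => s ≠ 0), χ (s * (A - A')) := by
    apply Finset.sum_nbij' (fun s => -(4 * s)⁻¹) (fun t => -(4 * t)⁻¹)
    · intro a ha
      rw [Finset.mem_filter] at ha ⊢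
      exact ⟨Finset.mem_univ _, neg_ne_zero.mpr (inv_ne_zero (mul_ne_zero h4 ha.2))⟩
    · intro a ha
      rw [Finset.mem_filter] at ha ⊢
      exact ⟨Finset.mem_univ _, neg_ne_zero.mpr (inv_ne_zero (mul_ne_zero h4 ha.2))⟩
    · intro a ha
      rw [Finset.mem_filter] at ha
      field_simp
    · intro a ha
      rw [Finset.mem_filter] at ha
      field_simp
    · intro a ha
      rw [Finset.mem_filter] at ha
      have h4a : (4:F) * a ≠ 0 := mul_ne_zero h4 ha.2
      congr 1
      ring
  -- assembly
  have split0 : ∑ s : F, G s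
      = G 0 + ∑ s ∈ univ.filter (fun s : F => s ≠ 0), G s := by
    rw [← Finset.sum_filter_add_sum_filter_not univ (fun s : F => s = 0) G]
    congr 1
    have : univ.filter (fun s : F => s = 0) = {0} := by
      ext s; simp
    rw [this, Finset.sum_singleton]
  have Cne : ∑ s ∈ univ.filter (fun s : F => s ≠ 0), G s
      = q ^ d * ∑ s ∈ univ.filter (fun s : F => s ≠ 0), χ (s * (A - A')) := by
    rw [← C5, Finset.mul_sum]
    apply Finset.sum_congr rfl
    intro s hs
    rw [Finset.mem_filter] at hs
    exact C4 s hs.2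
  have hsum : ∑ x : Fin d → F, Fn x = q⁻¹ * ∑ s : F, G s := by
    rw [C2]
    field_simp
  rw [C1, hsum, split0, C3, Cne]
  have hqd : (q : ℂ) ^ d ≠ 0 := pow_ne_zero d hq0
  generalize ∑ s ∈ univ.filter (fun s : F => s ≠ 0), χ (s * (A - A')) = T
  field_simp
  split_ifs <;> ring
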